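/- For any real κ, any involution σ on a Hilbert space H, and any unit vector ψ ∈ H, the operator identity e^{-κσ}|ψ⟩ = 2A ⟨0|_a e^{-i(Wσ ⊗ X_a + bI ⊗ X_a)} (|ψ⟩ ⊗ |0⟩_a) holds, where the ancilla is a qubit, X_a is the Pauli X on the ancilla, A = e^{|κ|}/2, W = (1/2)arccos(e^{-2|κ|}), b = sign(κ)W, and ⟨0|_a denotes the partial inner product projecting the ancilla onto |0⟩. -/

import Mathlib

open Matrix
open scoped Kronecker

/-- RBM normalization `A(κ) = e^{|κ|}/2`. -/
noncomputable def Aparam (κ : ℝ) : ℝ := Real.exp |κ| / 2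

/-- RBM weight `W(κ) = (1/2) arccos(e^{-2|κ|})`. -/
noncomputable def Wparam (κ : ℝ) : ℝ := Real.arccos (Real.exp (-2 * |κ|)) / 2

/-- RBM bias `b(κ) = sign(κ) W(κ)`. -/
noncomputable def bparam (κ : ℝ) : ℝ := Real.sign κ * Wparam κ

/-- Pauli X on the ancilla qubit. -/
def PX : Matrix (Fin 2) (Fin 2) ℂ := !![0, 1; 1, 0]

section Aux

variable {n : Type*} [Fintype n] [DecidableEq n]

/-- Exponential of a scalar multiple of an involution. -/
lemma exp_smul_of_sq_one (N : Matrix n n ℂ) (h : N * N = 1) (z : ℂ) :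
    NormedSpace.exp (z • N) =
      ((Complex.exp z + Complex.exp (-z)) / 2) • (1 : Matrix n n ℂ) +
        ((Complex.exp z - Complex.exp (-z)) / 2) • N := by
  letI : SeminormedRing (Matrix n n ℂ) := Matrix.linftyOpSemiNormedRing
  letI : NormedRing (Matrix n n ℂ) := Matrix.linftyOpNormedRing
  letI : NormedAlgebra ℂ (Matrix n n ℂ) := Matrix.linftyOpNormedAlgebra
  set e : Matrix n n ℂ := (2⁻¹ : ℂ) • (1 + N) with he_def
  set f : Matrix n n ℂ := (2⁻¹ : ℂ) • (1 - N) with hf_def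
  have hplus : (1 + N) * (1 + N) = (2 : ℂ) • (1 + N) := by
    simp only [mul_add, add_mul, one_mul, mul_one, h]; module
  have hminus : (1 - N) * (1 - N) = (2 : ℂ) • (1 - N) := by
    simp only [mul_sub, sub_mul, one_mul, mul_one, h]; module
  have hmix : (1 + N) * (1 - N) = 0 := by
    simp only [mul_sub, add_mul, one_mul, mul_one, h]; module
  have hmix' : (1 - N) * (1 + N) = 0 := by
    simp only [mul_add, sub_mul, one_mul, mul_one, h]; module
  have hee : e * e = e := by
    simp only [he_def, smul_mul_smul_comm, hplus, smul_smul]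
    norm_num
  have hff : f * f = f := by
    simp only [hf_def, smul_mul_smul_comm, hminus, smul_smul]
    norm_num
  have hef : e * f = 0 := by
    simp only [he_def, hf_def, smul_mul_smul_comm, hmix, smul_zero]
  have hfe : f * e = 0 := by
    simp only [he_def, hf_def, smul_mul_smul_comm, hmix', smul_zero]
  have hsum : e + f = 1 := by rw [he_def, hf_def]; module
  have hdiff : e - f = N := by rw [he_def, hf_def]; module
  clear_value e f
  -- the algebra hom from ℂ × ℂ
  let φ : (ℂ × ℂ) →ₐ[ℂ] Matrix n n ℂ :=
    { toFun := fun p => p.1 • e + p.2 • f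
      map_one' := by
        show (1 : ℂ) • e + (1 : ℂ) • f = 1
        rw [one_smul, one_smul, hsum]
      map_mul' := by
        intro x y
        show (x.1 * y.1) • e + (x.2 * y.2) • f =
          (x.1 • e + x.2 • f) * (y.1 • e + y.2 • f)
        simp only [add_mul, mul_add, smul_mul_assoc, mul_smul_comm, smul_smul,
          hee, hff, hef, hfe, smul_zero, add_zero, zero_add]
        module
      map_zero' := by
        show (0 : ℂ) • e + (0 : ℂ) • f = 0
        simp
      map_add' := by
        intro x y
        show (x.1 + y.1) • e + (x.2 + y.2) • f = (x.1 • e + x.2 • f) + (y.1 • e + y.2 • f)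
        rw [add_smul, add_smul]; abel
      commutes' := by
        intro c
        show c • e + c • f = algebraMap ℂ (Matrix n n ℂ) c
        rw [Algebra.algebraMap_eq_smul_one, ← hsum, smul_add] }
  have hφcont : Continuous φ := by
    show Continuous fun p : ℂ × ℂ => p.1 • e + p.2 • f
    fun_prop
  have hzN : z • N = φ (z, -z) := by
    show z • N = z • e + (-z) • f
    rw [← hdiff, smul_sub, neg_smul, sub_eq_add_neg]
  have hexp : NormedSpace.exp ((z, -z) : ℂ × ℂ) = (Complex.exp z, Complex.exp (-z)) := by
    ext
    · rw [Prod.fst_exp, Complex.exp_eq_exp_ℂ]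
    · rw [Prod.snd_exp, Complex.exp_eq_exp_ℂ]
  rw [hzN]
  refine (NormedSpace.map_exp φ hφcont (z, -z)).symm.trans ?_
  rw [hexp]
  show Complex.exp z • e + Complex.exp (-z) • f = _
  rw [← hsum, ← hdiff]
  module

lemma cos_coeff (θ : ℝ) :
    (Complex.exp (-Complex.I * θ) + Complex.exp (-(-Complex.I * θ))) / 2 =
      ((Real.cos θ : ℝ) : ℂ) := by
  have h1 : (-Complex.I * (θ : ℂ)) = ((-θ : ℝ) : ℂ) * Complex.I := by push_cast; ring
  rw [h1]
  have h2 : -(((-θ : ℝ) : ℂ) * Complex.I) = ((θ : ℝ) : ℂ) * Complex.I := by push_cast; ring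
  rw [h2, Complex.exp_mul_I, Complex.exp_mul_I]
  push_cast
  rw [Complex.cos_neg, Complex.sin_neg, ← Complex.ofReal_cos]
  ring

lemma sin_coeff (θ : ℝ) :
    (Complex.exp (-Complex.I * θ) - Complex.exp (-(-Complex.I * θ))) / 2 =
      -(Complex.I * ((Real.sin θ : ℝ) : ℂ)) := by
  have h1 : (-Complex.I * (θ : ℂ)) = ((-θ : ℝ) : ℂ) * Complex.I := by push_cast; ring
  rw [h1]
  have h2 : -(((-θ : ℝ) : ℂ) * Complex.I) = ((θ : ℝ) : ℂ) * Complex.I := by push_cast; ring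
  rw [h2, Complex.exp_mul_I, Complex.exp_mul_I]
  push_cast
  rw [Complex.cos_neg, Complex.sin_neg, ← Complex.ofReal_sin]
  ring

lemma cos_two_Wparam (κ : ℝ) : Real.cos (2 * Wparam κ) = Real.exp (-2 * |κ|) := by
  have h1 : (-1 : ℝ) ≤ Real.exp (-2 * |κ|) := le_of_lt (lt_of_lt_of_le (by norm_num) (Real.exp_pos _).le)
  have h2 : Real.exp (-2 * |κ|) ≤ 1 := Real.exp_le_one_iff.2 (by nlinarith [abs_nonneg κ])
  have : 2 * Wparam κ = Real.arccos (Real.exp (-2 * |κ|)) := by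
    rw [Wparam]; ring
  rw [this, Real.cos_arccos h1 h2]

lemma cosh_ident (κ : ℝ) :
    Real.cosh κ = 2 * Aparam κ * (Real.cos (Wparam κ) * Real.cos (bparam κ)) := by
  have hc2 := cos_two_Wparam κ
  have hcsq : Real.cos (Wparam κ) ^ 2 = 1 / 2 + Real.exp (-2 * |κ|) / 2 := by
    rw [Real.cos_sq, ← hc2]
  rcases lt_trichotomy κ 0 with h | h | h
  · have hs : Real.sign κ = -1 := Real.sign_of_neg h
    have habs : |κ| = -κ := abs_of_neg h
    have key : Real.exp (-κ) * Real.exp (-2 * -κ) = Real.exp κ := by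
      rw [← Real.exp_add]; ring_nf
    rw [habs] at hcsq
    rw [bparam, hs, neg_one_mul, Real.cos_neg, ← pow_two, hcsq, Real.cosh_eq, Aparam, habs]
    linear_combination (-1/2 : ℝ) * key
  · subst h
    simp [bparam, Wparam, Aparam, Real.arccos_one]
  · have hs : Real.sign κ = 1 := Real.sign_of_pos h
    have habs : |κ| = κ := abs_of_pos h
    have key : Real.exp κ * Real.exp (-2 * κ) = Real.exp (-κ) := by
      rw [← Real.exp_add]; ring_nf
    rw [habs] at hcsq
    rw [bparam, hs, one_mul, ← pow_two, hcsq, Real.cosh_eq, Aparam, habs]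
    linear_combination (-1/2 : ℝ) * key

lemma sinh_ident (κ : ℝ) :
    Real.sinh κ = 2 * Aparam κ * (Real.sin (Wparam κ) * Real.sin (bparam κ)) := by
  have hc2 := cos_two_Wparam κ
  have hssq : Real.sin (Wparam κ) ^ 2 = 1 / 2 - Real.exp (-2 * |κ|) / 2 := by
    have h0 := Real.sin_sq_add_cos_sq (Wparam κ)
    have hcsq : Real.cos (Wparam κ) ^ 2 = 1 / 2 + Real.exp (-2 * |κ|) / 2 := by
      rw [Real.cos_sq, ← hc2]
    linarith
  rcases lt_trichotomy κ 0 with h | h | h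
  · have hs : Real.sign κ = -1 := Real.sign_of_neg h
    have habs : |κ| = -κ := abs_of_neg h
    have key : Real.exp (-κ) * Real.exp (-2 * -κ) = Real.exp κ := by
      rw [← Real.exp_add]; ring_nf
    rw [habs] at hssq
    rw [bparam, hs, neg_one_mul, Real.sin_neg, Real.sinh_eq, Aparam, habs]
    rw [show Real.sin (Wparam κ) * -Real.sin (Wparam κ) = -(Real.sin (Wparam κ) ^ 2) by ring,
      hssq]
    linear_combination (-1/2 : ℝ) * key
  · subst h
    simp [bparam, Wparam, Aparam, Real.arccos_one]
  · have hs : Real.sign κ = 1 := Real.sign_of_pos h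
    have habs : |κ| = κ := abs_of_pos h
    have key : Real.exp κ * Real.exp (-2 * κ) = Real.exp (-κ) := by
      rw [← Real.exp_add]; ring_nf
    rw [habs] at hssq
    rw [bparam, hs, one_mul, ← pow_two, hssq, Real.sinh_eq, Aparam, habs]
    linear_combination (1/2 : ℝ) * key

/-- mulVec of a Kronecker product against `ψ ⊗ |0⟩`, evaluated at ancilla `0`. -/
lemma kron_mulVec_zero {d : ℕ} (A : Matrix (Fin d) (Fin d) ℂ) (B : Matrix (Fin 2) (Fin 2) ℂ)
    (ψ : Fin d → ℂ) (i : Fin d) :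
    ((A ⊗ₖ B) *ᵥ fun p : Fin d × Fin 2 => ψ p.1 * if p.2 = 0 then 1 else 0) (i, 0) =
      B 0 0 * (A *ᵥ ψ) i := by
  simp only [Matrix.mulVec, dotProduct, Fintype.sum_prod_type,
    Matrix.kroneckerMap_apply, Fin.sum_univ_two]
  rw [Finset.mul_sum]
  refine Finset.sum_congr rfl fun j _ => ?_
  norm_num
  ring

end Aux

/-- `e^{-κσ}|ψ⟩ = 2A ⟨0|_a e^{-i(Wσ⊗X_a + bI⊗X_a)} (|ψ⟩⊗|0⟩_a)`. -/
theorem rbm_block_encoding {d : ℕ} (κ : ℝ) (σ : Matrix (Fin d) (Fin d) ℂ)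
    (hherm : σ.IsHermitian) (hinv : σ * σ = 1)
    (ψ : Fin d → ℂ) (hψ : star ψ ⬝ᵥ ψ = 1) :
    NormedSpace.exp ((-κ : ℂ) • σ) *ᵥ ψ =
      fun i : Fin d =>
        ((2 * Aparam κ : ℝ) : ℂ) *
          (NormedSpace.exp ((-Complex.I) •
              ((((Wparam κ : ℝ) : ℂ) • σ + ((bparam κ : ℝ) : ℂ) • (1 : Matrix (Fin d) (Fin d) ℂ)) ⊗ₖ PX)) *ᵥ
            (fun p : Fin d × Fin 2 => ψ p.1 * if p.2 = 0 then 1 else 0)) (i, 0) := by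
  have hPX : PX * PX = 1 := by
    rw [PX, Matrix.mul_fin_two, Matrix.one_fin_two]
    norm_num
  set W : ℝ := Wparam κ with hW
  set b : ℝ := bparam κ with hb
  set S : Matrix (Fin d × Fin 2) (Fin d × Fin 2) ℂ := σ ⊗ₖ PX with hS_def
  set T : Matrix (Fin d × Fin 2) (Fin d × Fin 2) ℂ := (1 : Matrix (Fin d) (Fin d) ℂ) ⊗ₖ PX
    with hT_def
  have hSS : S * S = 1 := by
    rw [hS_def, ← Matrix.mul_kronecker_mul, hinv, hPX, Matrix.one_kronecker_one]
  have hTT : T * T = 1 := by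
    rw [hT_def, ← Matrix.mul_kronecker_mul, hPX, one_mul, Matrix.one_kronecker_one]
  have hST : S * T = σ ⊗ₖ (1 : Matrix (Fin 2) (Fin 2) ℂ) := by
    rw [hS_def, hT_def, ← Matrix.mul_kronecker_mul, mul_one, hPX]
  have hTS : T * S = σ ⊗ₖ (1 : Matrix (Fin 2) (Fin 2) ℂ) := by
    rw [hS_def, hT_def, ← Matrix.mul_kronecker_mul, one_mul, hPX]
  -- decompose the exponent
  have hexpand : (-Complex.I) •
      (((W : ℂ) • σ + (b : ℂ) • (1 : Matrix (Fin d) (Fin d) ℂ)) ⊗ₖ PX) =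
      (-Complex.I * (W : ℂ)) • S + (-Complex.I * (b : ℂ)) • T := by
    rw [Matrix.add_kronecker, Matrix.smul_kronecker, Matrix.smul_kronecker, smul_add,
      smul_smul, smul_smul, hS_def, hT_def]
  have hcomm : Commute ((-Complex.I * (W : ℂ)) • S) ((-Complex.I * (b : ℂ)) • T) := by
    have : Commute S T := by rw [Commute, SemiconjBy, hST, hTS]
    exact (this.smul_left _).smul_right _
  have hexpS := exp_smul_of_sq_one S hSS (-Complex.I * (W : ℂ))
  have hexpT := exp_smul_of_sq_one T hTT (-Complex.I * (b : ℂ))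
  rw [cos_coeff, sin_coeff] at hexpS hexpT
  have hexpσ := exp_smul_of_sq_one σ hinv (-κ : ℂ)
  have hexp_big :
      NormedSpace.exp ((-Complex.I) •
        (((W : ℂ) • σ + (b : ℂ) • (1 : Matrix (Fin d) (Fin d) ℂ)) ⊗ₖ PX)) =
      ((Real.cos W : ℂ) * (Real.cos b : ℂ)) • (1 : Matrix (Fin d × Fin 2) (Fin d × Fin 2) ℂ)
      + ((Real.cos W : ℂ) * -(Complex.I * (Real.sin b : ℂ))) • T
      + (-(Complex.I * (Real.sin W : ℂ)) * (Real.cos b : ℂ)) • S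
      + (-(Complex.I * (Real.sin W : ℂ)) * -(Complex.I * (Real.sin b : ℂ))) •
          (σ ⊗ₖ (1 : Matrix (Fin 2) (Fin 2) ℂ)) := by
    rw [hexpand, Matrix.exp_add_of_commute _ _ hcomm, hexpS, hexpT]
    simp only [add_mul, mul_add, smul_mul_smul_comm, one_mul, mul_one, hST]
    abel
  rw [hexpσ, hexp_big]
  funext i
  have hv1 : ((1 : Matrix (Fin d × Fin 2) (Fin d × Fin 2) ℂ) *ᵥ
      fun p : Fin d × Fin 2 => ψ p.1 * if p.2 = 0 then 1 else 0) (i, 0) = ψ i := by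
    rw [Matrix.one_mulVec]; simp
  have hvT := kron_mulVec_zero (1 : Matrix (Fin d) (Fin d) ℂ) PX ψ i
  have hvS := kron_mulVec_zero σ PX ψ i
  have hvσ1 := kron_mulVec_zero σ (1 : Matrix (Fin 2) (Fin 2) ℂ) ψ i
  have hPX00 : PX 0 0 = 0 := by rw [PX]; norm_num
  have h100 : (1 : Matrix (Fin 2) (Fin 2) ℂ) 0 0 = 1 := by simp
  rw [hPX00, zero_mul] at hvT hvS
  rw [h100, one_mul] at hvσ1
  rw [← hT_def] at hvT
  rw [← hS_def] at hvS
  simp only [Matrix.add_mulVec, Matrix.smul_mulVec, Pi.add_apply, Pi.smul_apply,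
    smul_eq_mul, hv1, hvT, hvS, hvσ1, mul_zero, add_zero]
  rw [Matrix.one_mulVec]
  -- now a scalar identity
  have eneg : Complex.exp (-(κ : ℂ)) = ((Real.exp (-κ) : ℝ) : ℂ) := by
    rw [Complex.ofReal_exp, Complex.ofReal_neg]
  have epos : Complex.exp (- -(κ : ℂ)) = ((Real.exp κ : ℝ) : ℂ) := by
    rw [neg_neg, Complex.ofReal_exp]
  have hcosh : ((Real.cosh κ : ℝ) : ℂ) =
      (Complex.exp (-κ : ℂ) + Complex.exp (-(-κ : ℂ))) / 2 := by
    rw [Real.cosh_eq, eneg, epos]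
    push_cast
    ring
  have hsinh : ((Real.sinh κ : ℝ) : ℂ) =
      -((Complex.exp (-κ : ℂ) - Complex.exp (-(-κ : ℂ))) / 2) := by
    rw [Real.sinh_eq, eneg, epos]
    push_cast
    ring
  have hc := cosh_ident κ
  have hs := sinh_ident κ
  have hcC : ((Real.cosh κ : ℝ) : ℂ) =
      ((2 * Aparam κ : ℝ) : ℂ) * ((Real.cos W : ℂ) * (Real.cos b : ℂ)) := by
    rw [hW, hb]; exact_mod_cast congrArg (Complex.ofReal) hc
  have hsC : ((Real.sinh κ : ℝ) : ℂ) =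
      ((2 * Aparam κ : ℝ) : ℂ) * ((Real.sin W : ℂ) * (Real.sin b : ℂ)) := by
    rw [hW, hb]; exact_mod_cast congrArg (Complex.ofReal) hs
  have e1 : (Complex.exp (-κ : ℂ) + Complex.exp (-(-κ : ℂ))) / 2 =
      ((2 * Aparam κ : ℝ) : ℂ) * ((Real.cos W : ℂ) * (Real.cos b : ℂ)) := by
    rw [← hcosh]; exact hcC
  have e2 : (Complex.exp (-κ : ℂ) - Complex.exp (-(-κ : ℂ))) / 2 =
      -(((2 * Aparam κ : ℝ) : ℂ) * ((Real.sin W : ℂ) * (Real.sin b : ℂ))) := by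
    have := hsinh
    rw [hsC] at this
    linear_combination this
  rw [e1, e2]
  have hI : Complex.I * Complex.I = -1 := Complex.I_mul_I
  ring_nf
  rw [show Complex.I ^ 2 = -1 by rw [sq, hI]]
  ring
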